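/- Let z ∈ ℂ with |z| < 1. Then ∫₀^{2π} g_z(θ) dθ = 1, where g_z(θ) = (1/(4π))·(e^{iθ}·C(z, e^{iθ}) − e^{−iθ}·D(z, e^{iθ})). In particular the boundary integral of the propagator, ∫_{∂D̄} ω(z,·), is independent of the interior point z and equals 1. -/

import Mathlib

open Complex MeasureTheory intervalIntegral

/-- `C z w` is `4πi` times the coefficient of `dw` in the propagator 1-form `ω(z,w)`. -/
noncomputable def propC (z w : ℂ) : ℂ :=
  -(z - w)⁻¹ + (starRingEnd ℂ) z / (1 - (starRingEnd ℂ) z * w)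

/-- `D z w` is `4πi` times the coefficient of `dw̄` in the propagator 1-form `ω(z,w)`. -/
noncomputable def propD (z w : ℂ) : ℂ :=
  ((starRingEnd ℂ) z - (starRingEnd ℂ) w)⁻¹ - z / (1 - z * (starRingEnd ℂ) w)

/-- `g z θ` is the coefficient of `dθ` in the pullback of `ω(z,·)` to the boundary circle
parametrized by `w = e^{iθ}`. -/
noncomputable def gProp (z : ℂ) (θ : ℝ) : ℂ :=
  (1 / (4 * (Real.pi : ℂ))) *
    (Complex.exp (Complex.I * θ) * propC z (Complex.exp (Complex.I * θ)) -
      Complex.exp (-(Complex.I * θ)) * propD z (Complex.exp (Complex.I * θ)))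

section aux

variable {z : ℂ} (hz : ‖z‖ < 1)

lemma abs_exp_I_mul (θ : ℝ) : ‖Complex.exp (Complex.I * θ)‖ = 1 := by
  rw [Complex.norm_exp]; simp

lemma conj_exp_I_mul (θ : ℝ) :
    (starRingEnd ℂ) (Complex.exp (Complex.I * θ)) = Complex.exp (-(Complex.I * θ)) := by
  rw [← Complex.exp_conj]; simp

include hz in
lemma ne_one_sub (w : ℂ) (hw : ‖w‖ = 1) : 1 - z * w ≠ 0 := by
  intro h
  have : z * w = 1 := by linear_combination -h
  have := congrArg norm this
  rw [norm_mul, hw, norm_one, mul_one] at this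
  linarith

include hz in
lemma ne_sub (w : ℂ) (hw : ‖w‖ = 1) : z - w ≠ 0 := by
  intro h
  have : z = w := by linear_combination h
  rw [← this] at hw
  linarith

end aux

theorem algId (z w c p i : ℂ) (hw0 : w ≠ 0) (h2 : 1 - c * w ≠ 0)
    (h3 : 1 - z * w⁻¹ ≠ 0) (h1 : z - w ≠ 0) (h4 : c - w⁻¹ ≠ 0)
    (hπ : p ≠ 0) (hI : i * i = -1) :
    (1 / (4 * p)) *
      (w * (-(z - w)⁻¹ + c / (1 - c * w)) -
        w⁻¹ * ((c - w⁻¹)⁻¹ - z / (1 - z * w⁻¹))) =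
    1 / (2 * p) +
      i / (2 * p) *
        (-(c * (i * w)) / (1 - c * w) -
          -(z * (-i * w⁻¹)) / (1 - z * w⁻¹)) := by
  have hI2 : i ^ 2 = -1 := by rw [sq]; exact hI
  have h3' : w - z ≠ 0 := fun h => h1 (by linear_combination -h)
  have h4' : c * w - 1 ≠ 0 := fun h => h2 (by linear_combination -h)
  have h2'' : 1 - w * c ≠ 0 := by rwa [mul_comm]
  have h4'' : w * c - 1 ≠ 0 := by rwa [mul_comm]
  field_simp
  ring_nf
  simp only [hI2]
  ring

/-- The boundary integral of the propagator `∫_{∂D̄} ω(z,·)` equals `1` for any interior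
point `z`. -/
theorem propagator_boundary_integral_eq_one (z : ℂ) (hz : ‖z‖ < 1) :
    ∫ θ in (0 : ℝ)..(2 * Real.pi), gProp z θ = 1 := by
  have hπ : (Real.pi : ℂ) ≠ 0 := by exact_mod_cast Real.pi_ne_zero
  have hzc : ‖(starRingEnd ℂ) z‖ < 1 := by rwa [RCLike.norm_conj]
  set F : ℝ → ℂ := fun θ =>
    (θ : ℂ) / (2 * Real.pi) + (Complex.I / (2 * Real.pi)) *
      (Complex.log (1 - (starRingEnd ℂ) z * Complex.exp (Complex.I * θ)) -
       Complex.log (1 - z * Complex.exp (-(Complex.I * θ)))) with hFdef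
  -- derivative of exp(I θ) and exp(-I θ)
  have hexp : ∀ θ : ℝ, HasDerivAt (fun t : ℝ => Complex.exp (Complex.I * t))
      (Complex.I * Complex.exp (Complex.I * θ)) θ := by
    intro θ
    have h := (((hasDerivAt_id (θ : ℂ)).const_mul Complex.I).cexp).comp_ofReal
    simpa [mul_comm] using h
  have hexpneg : ∀ θ : ℝ, HasDerivAt (fun t : ℝ => Complex.exp (-(Complex.I * t)))
      (-Complex.I * Complex.exp (-(Complex.I * θ))) θ := by
    intro θ
    have h := ((((hasDerivAt_id (θ : ℂ)).const_mul Complex.I).neg).cexp).comp_ofReal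
    simpa [mul_comm] using h
  -- slit plane membership
  have hslit : ∀ (c : ℂ), ‖c‖ < 1 → ∀ w : ℂ, ‖w‖ = 1 →
      (1 - c * w) ∈ Complex.slitPlane := by
    intro c hc w hw
    left
    have h1 : (c * w).re ≤ ‖c * w‖ := Complex.re_le_norm _
    have h2 : ‖c * w‖ < 1 := by
      rw [norm_mul, hw, mul_one]; exact hc
    simp only [Complex.sub_re, Complex.one_re, Complex.mul_re]
    have : (c*w).re < 1 := lt_of_le_of_lt h1 h2
    simp only [Complex.mul_re] at this
    linarith
  -- F has derivative gProp z θ everywhere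
  have key : ∀ θ : ℝ, HasDerivAt F (gProp z θ) θ := by
    intro θ
    have habs := abs_exp_I_mul θ
    have habsneg : ‖Complex.exp (-(Complex.I * θ))‖ = 1 := by
      rw [Complex.norm_exp]; simp
    have hw0 : Complex.exp (Complex.I * θ) ≠ 0 := Complex.exp_ne_zero _
    have hA : HasDerivAt (fun t : ℝ => Complex.log (1 - (starRingEnd ℂ) z * Complex.exp (Complex.I * t)))
        ((-((starRingEnd ℂ) z * (Complex.I * Complex.exp (Complex.I * θ)))) /
          (1 - (starRingEnd ℂ) z * Complex.exp (Complex.I * θ))) θ := by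
      have hu : HasDerivAt (fun t : ℝ => 1 - (starRingEnd ℂ) z * Complex.exp (Complex.I * t))
          (-((starRingEnd ℂ) z * (Complex.I * Complex.exp (Complex.I * θ)))) θ :=
        ((hexp θ).const_mul ((starRingEnd ℂ) z)).const_sub 1
      exact hu.clog_real (hslit _ hzc _ habs)
    have hB : HasDerivAt (fun t : ℝ => Complex.log (1 - z * Complex.exp (-(Complex.I * t))))
        ((-(z * (-Complex.I * Complex.exp (-(Complex.I * θ))))) /
          (1 - z * Complex.exp (-(Complex.I * θ)))) θ := by
      have hu : HasDerivAt (fun t : ℝ => 1 - z * Complex.exp (-(Complex.I * t)))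
          (-(z * (-Complex.I * Complex.exp (-(Complex.I * θ))))) θ :=
        ((hexpneg θ).const_mul z).const_sub 1
      exact hu.clog_real (hslit _ hz _ habsneg)
    have hθ : HasDerivAt (fun t : ℝ => (t : ℂ) / (2 * Real.pi)) (1 / (2 * Real.pi)) θ := by
      simpa using ((hasDerivAt_id (θ : ℂ)).comp_ofReal).div_const (2 * Real.pi)
    have hD := hθ.add (((hA.sub hB)).const_mul (Complex.I / (2 * Real.pi)))
    refine HasDerivAt.congr_deriv hD ?_
    symm
    -- algebraic identity
    have h2 : 1 - (starRingEnd ℂ) z * Complex.exp (Complex.I * θ) ≠ 0 :=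
      ne_one_sub hzc _ habs
    have h3 : 1 - z * Complex.exp (-(Complex.I * θ)) ≠ 0 := ne_one_sub hz _ habsneg
    have h1 : z - Complex.exp (Complex.I * θ) ≠ 0 := ne_sub hz _ habs
    have h4 : (starRingEnd ℂ) z - Complex.exp (-(Complex.I * θ)) ≠ 0 :=
      ne_sub hzc _ habsneg
    simp only [gProp, propC, propD, conj_exp_I_mul]
    rw [Complex.exp_neg] at h3 h4 ⊢
    exact algId z _ _ _ _ (Complex.exp_ne_zero _) h2 h3 h1 h4 hπ Complex.I_mul_I
  -- continuity / integrability of gProp z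
  have hcont : Continuous (gProp z) := by
    have hce : Continuous fun θ : ℝ => Complex.exp (Complex.I * θ) :=
      Complex.continuous_exp.comp (continuous_const.mul Complex.continuous_ofReal)
    have hcen : Continuous fun θ : ℝ => Complex.exp (-(Complex.I * θ)) :=
      Complex.continuous_exp.comp (continuous_const.mul Complex.continuous_ofReal).neg
    have habs := abs_exp_I_mul
    have habsneg : ∀ θ : ℝ, ‖Complex.exp (-(Complex.I * θ))‖ = 1 := by
      intro θ; rw [Complex.norm_exp]; simp
    unfold gProp propC propD
    refine continuous_const.mul (Continuous.sub (hce.mul ?_) (hcen.mul ?_))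
    · refine Continuous.add ?_ ?_
      · exact ((continuous_const.sub hce).inv₀ fun θ => ne_sub hz _ (habs θ)).neg
      · exact continuous_const.div (continuous_const.sub (continuous_const.mul hce))
          fun θ => ne_one_sub hzc _ (habs θ)
    · simp only [conj_exp_I_mul]
      refine Continuous.sub ?_ ?_
      · exact (continuous_const.sub hcen).inv₀ fun θ => ne_sub hzc _ (habsneg θ)
      · exact continuous_const.div (continuous_const.sub (continuous_const.mul hcen))
          fun θ => ne_one_sub hz _ (habsneg θ)
  have hint : IntervalIntegrable (gProp z) volume 0 (2 * Real.pi) :=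
    hcont.intervalIntegrable _ _
  rw [intervalIntegral.integral_eq_sub_of_hasDerivAt (fun t _ => key t) hint]
  -- compute F (2π) - F 0
  have he1 : Complex.exp (Complex.I * ((2 * Real.pi : ℝ) : ℂ)) = 1 := by
    push_cast
    rw [show Complex.I * (2 * (Real.pi : ℂ)) = 2 * Real.pi * Complex.I by ring]
    exact Complex.exp_two_pi_mul_I
  have he2 : Complex.exp (-(Complex.I * ((2 * Real.pi : ℝ) : ℂ))) = 1 := by
    rw [Complex.exp_neg, he1, inv_one]
  simp only [hFdef, he1, he2, Complex.ofReal_zero, mul_zero, neg_zero, Complex.exp_zero,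
    zero_div, mul_one]
  push_cast
  field_simp
  ring
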